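/- Let N ≥ 1 be an integer, let X be a nonempty subset of {1,…,N}, and let 𝒫 be a finite set of prime numbers. If Σ_{p∈𝒫} (log p)/|X mod p| > log N, then |X| ≤ (Σ_{p∈𝒫} log p) / (Σ_{p∈𝒫} (log p)/|X mod p| − log N). (Gallagher's larger sieve.) -/

import Mathlib

open Finset

/-- Cauchy–Schwarz fiber counting. -/
lemma gls_cs (X : Finset ℕ) (p : ℕ) :
    (X.card : ℝ)^2 ≤ ((X.image (fun x : ℕ => (x : ZMod p))).card : ℝ) *
      (((X ×ˢ X).filter (fun q : ℕ × ℕ => ((q.1 : ZMod p) = (q.2 : ZMod p)))).card : ℝ) := by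
  classical
  set I := X.image (fun x : ℕ => (x : ZMod p)) with hI
  have hcard : X.card = ∑ c ∈ I, (X.filter (fun x : ℕ => (x : ZMod p) = c)).card :=
    card_eq_sum_card_image _ _
  have hpair : ((X ×ˢ X).filter (fun q : ℕ × ℕ => ((q.1 : ZMod p) = (q.2 : ZMod p)))).card
      = ∑ c ∈ I, (X.filter (fun x : ℕ => (x : ZMod p) = c)).card ^ 2 := by
    rw [card_eq_sum_card_fiberwise (f := fun q : ℕ × ℕ => ((q.1 : ZMod p))) (t := I)
      (fun q hq => mem_image_of_mem _ (mem_product.mp (mem_filter.mp hq).1).1)]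
    refine Finset.sum_congr rfl fun c hc => ?_
    rw [filter_filter]
    have : ((X ×ˢ X).filter fun q : ℕ × ℕ =>
        ((q.1 : ZMod p) = (q.2 : ZMod p)) ∧ (q.1 : ZMod p) = c)
        = (X.filter (fun x : ℕ => (x : ZMod p) = c)) ×ˢ (X.filter (fun x : ℕ => (x : ZMod p) = c)) := by
      rw [← filter_product]
      apply filter_congr
      intro q hq
      constructor
      · rintro ⟨h1, h2⟩; exact ⟨h2, h1 ▸ h2⟩
      · rintro ⟨h1, h2⟩; exact ⟨h1.trans h2.symm, h1⟩
    rw [this, card_product, sq]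
  have key : ((∑ c ∈ I, ((X.filter (fun x : ℕ => (x : ZMod p) = c)).card : ℝ)))^2
      ≤ (I.card : ℝ) * ∑ c ∈ I, ((X.filter (fun x : ℕ => (x : ZMod p) = c)).card : ℝ)^2 :=
    sq_sum_le_card_mul_sum_sq
  rw [hcard, hpair]
  push_cast
  exact key

/-- Off-diagonal divisor bound. -/
lemma gls_off (N : ℕ) (x y : ℕ) (hx : x ∈ Finset.Icc 1 N) (hy : y ∈ Finset.Icc 1 N)
    (hxy : x ≠ y) (P : Finset ℕ) (hP : ∀ p ∈ P, p.Prime) :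
    ∑ p ∈ P.filter (fun p => (x : ZMod p) = (y : ZMod p)), Real.log p ≤ Real.log N := by
  classical
  set d : ℕ := max x y - min x y with hd
  have hxN := Finset.mem_Icc.mp hx
  have hyN := Finset.mem_Icc.mp hy
  have hd1 : 1 ≤ d := by
    rcases lt_or_gt_of_ne hxy with h | h <;> simp [hd] <;> omega
  have hdN : d ≤ N := by simp [hd]; omega
  set s := P.filter (fun p => (x : ZMod p) = (y : ZMod p)) with hs
  have hdvd : ∀ p ∈ s, p ∣ d := by
    intro p hp
    have h := (mem_filter.mp hp).2
    rw [ZMod.natCast_eq_natCast_iff] at h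
    have h' : min x y ≡ max x y [MOD p] := by
      rcases le_total x y with hle | hle
      · simpa [min_eq_left hle, max_eq_right hle] using h
      · simpa [min_eq_right hle, max_eq_left hle] using h.symm
    exact (Nat.modEq_iff_dvd' (min_le_max)).mp h'
  have hprod : (∏ p ∈ s, p) ∣ d :=
    Finset.prod_primes_dvd d
      (fun p hp => (hP p (mem_filter.mp hp).1).prime) hdvd
  have hprodpos : 0 < ∏ p ∈ s, p := Nat.pos_of_dvd_of_pos hprod (by omega)
  have hle : (∏ p ∈ s, p) ≤ d := Nat.le_of_dvd (by omega) hprod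
  have hlog : ∑ p ∈ s, Real.log p = Real.log (∏ p ∈ s, (p : ℝ)) := by
    rw [Real.log_prod]
    intro p hp
    exact_mod_cast (hP p (mem_filter.mp hp).1).pos.ne'
  rw [hlog]
  have heq : (∏ p ∈ s, (p : ℝ)) = ((∏ p ∈ s, p : ℕ) : ℝ) := by push_cast; ring
  rw [heq]
  apply Real.log_le_log (by exact_mod_cast hprodpos)
  exact_mod_cast le_trans hle hdN

/-- **Gallagher's larger sieve.** If `X ⊆ {1,…,N}` is nonempty and `𝒫` is a finite
set of primes with `∑_{p∈𝒫} log p / |X mod p| > log N`, then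
`|X| ≤ (∑_{p∈𝒫} log p) / (∑_{p∈𝒫} log p / |X mod p| − log N)`. -/
theorem gallagher_larger_sieve (N : ℕ) (hN : 1 ≤ N) (X : Finset ℕ)
    (hXsub : X ⊆ Finset.Icc 1 N) (hXne : X.Nonempty)
    (P : Finset ℕ) (hP : ∀ p ∈ P, p.Prime)
    (hpos : Real.log N <
      ∑ p ∈ P, Real.log p / ((X.image (fun x : ℕ => (x : ZMod p))).card : ℝ)) :
    (X.card : ℝ) ≤ (∑ p ∈ P, Real.log p) /
      ((∑ p ∈ P, Real.log p / ((X.image (fun x : ℕ => (x : ZMod p))).card : ℝ)) - Real.log N) := by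
  classical
  set L := Real.log N with hL
  set S := ∑ p ∈ P, Real.log p / ((X.image (fun x : ℕ => (x : ZMod p))).card : ℝ) with hS
  set A := ∑ p ∈ P, Real.log p with hA
  set T : ℕ → Finset (ℕ × ℕ) :=
    fun p => (X ×ˢ X).filter (fun q : ℕ × ℕ => ((q.1 : ZMod p) = (q.2 : ZMod p))) with hT
  have hlogp : ∀ p ∈ P, 0 ≤ Real.log p := fun p hp =>
    Real.log_nonneg (by exact_mod_cast (hP p hp).one_lt.le)
  have hLpos : 0 ≤ L := Real.log_natCast_nonneg N
  have hApos : 0 ≤ A := Finset.sum_nonneg hlogp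
  have hcardpos : (0:ℝ) < X.card := by exact_mod_cast card_pos.mpr hXne
  -- Step 1
  have step1 : (X.card : ℝ)^2 * S ≤ ∑ p ∈ P, Real.log p * ((T p).card : ℝ) := by
    rw [hS, Finset.mul_sum]
    apply Finset.sum_le_sum
    intro p hp
    have hrpos : (0:ℝ) < ((X.image (fun x : ℕ => (x : ZMod p))).card : ℝ) := by
      exact_mod_cast card_pos.mpr (hXne.image _)
    calc (X.card : ℝ)^2 * (Real.log p / ((X.image (fun x : ℕ => (x : ZMod p))).card : ℝ))
        = Real.log p * ((X.card : ℝ)^2 / ((X.image (fun x : ℕ => (x : ZMod p))).card : ℝ)) := by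
          ring
      _ ≤ Real.log p * ((T p).card : ℝ) := by
          apply mul_le_mul_of_nonneg_left _ (hlogp p hp)
          rw [div_le_iff₀ hrpos]
          linarith [gls_cs X p]
  -- Step 2
  have step2 : ∑ p ∈ P, Real.log p * ((T p).card : ℝ)
      ≤ (X.card : ℝ) * A + (X.card : ℝ)^2 * L := by
    have e1 : ∀ p : ℕ, Real.log p * ((T p).card : ℝ)
        = ∑ q ∈ X ×ˢ X, if ((q.1 : ZMod p) = (q.2 : ZMod p)) then Real.log p else 0 := by
      intro p
      rw [← Finset.sum_filter, Finset.sum_const, nsmul_eq_mul, mul_comm]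
    have e2 : ∑ p ∈ P, Real.log p * ((T p).card : ℝ)
        = ∑ q ∈ X ×ˢ X, ∑ p ∈ P.filter (fun p => (q.1 : ZMod p) = (q.2 : ZMod p)),
            Real.log p := by
      calc ∑ p ∈ P, Real.log p * ((T p).card : ℝ)
          = ∑ p ∈ P, ∑ q ∈ X ×ˢ X,
              if ((q.1 : ZMod p) = (q.2 : ZMod p)) then Real.log p else 0 :=
            Finset.sum_congr rfl fun p _ => e1 p
        _ = ∑ q ∈ X ×ˢ X, ∑ p ∈ P,
              if ((q.1 : ZMod p) = (q.2 : ZMod p)) then Real.log p else 0 :=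
            Finset.sum_comm
        _ = _ := Finset.sum_congr rfl fun q _ => (Finset.sum_filter _ _).symm
    rw [e2]
    have hbound : ∀ q ∈ X ×ˢ X,
        (∑ p ∈ P.filter (fun p => (q.1 : ZMod p) = (q.2 : ZMod p)), Real.log p)
          ≤ if q.1 = q.2 then A else L := by
      intro q hq
      rcases mem_product.mp hq with ⟨h1, h2⟩
      by_cases hd : q.1 = q.2
      · rw [if_pos hd]
        exact Finset.sum_le_sum_of_subset_of_nonneg (Finset.filter_subset _ _)
          (fun p hp _ => hlogp p hp)
      · rw [if_neg hd]
        exact gls_off N q.1 q.2 (hXsub h1) (hXsub h2) hd P hP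
    calc ∑ q ∈ X ×ˢ X, ∑ p ∈ P.filter (fun p => (q.1 : ZMod p) = (q.2 : ZMod p)), Real.log p
        ≤ ∑ q ∈ X ×ˢ X, (if q.1 = q.2 then A else L) := Finset.sum_le_sum hbound
      _ = (((X ×ˢ X).filter (fun q : ℕ × ℕ => q.1 = q.2)).card : ℝ) * A
          + (((X ×ˢ X).filter (fun q : ℕ × ℕ => ¬ q.1 = q.2)).card : ℝ) * L := by
          rw [Finset.sum_ite, Finset.sum_const, Finset.sum_const, nsmul_eq_mul, nsmul_eq_mul]
      _ ≤ (X.card : ℝ) * A + (X.card : ℝ)^2 * L := by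
          have hdc : ((X ×ˢ X).filter (fun q : ℕ × ℕ => q.1 = q.2)).card = X.card :=
            by rw [← Finset.diag_eq_filter]; exact X.diag_card
          have hoc : ((X ×ˢ X).filter (fun q : ℕ × ℕ => ¬ q.1 = q.2)).card ≤ X.card * X.card :=
            le_trans (Finset.card_filter_le _ _) (by rw [Finset.card_product])
          have hoc' : (((X ×ˢ X).filter (fun q : ℕ × ℕ => ¬ q.1 = q.2)).card : ℝ)
              ≤ (X.card : ℝ)^2 := by rw [sq]; exact_mod_cast hoc
          rw [hdc]
          have := mul_le_mul_of_nonneg_right hoc' hLpos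
          linarith
  -- conclude
  have key : (X.card : ℝ) * (S - L) ≤ A := by
    have h : (X.card : ℝ) * (S - L) * X.card ≤ A * X.card := by nlinarith [step1, step2]
    exact le_of_mul_le_mul_right h hcardpos
  rw [le_div_iff₀ (by linarith : (0:ℝ) < S - L)]
  exact key
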